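/- As |z| → ∞ with x = y = 0 fixed, the channel gain ζ(0,0,z) multiplied by 4π z²/A converges to 1; i.e., ζ(0,0,z) ~ A/(4π z²), matching the far-field gain formula at broadside (φ = 0). -/

import Mathlib

open Real Finset
open Filter

/-- `g_i(α) = √A/2 + (-1)^i α`. -/
noncomputable def gfun (A : ℝ) (i : ℕ) (α : ℝ) : ℝ := Real.sqrt A / 2 + (-1 : ℝ) ^ i * α

/-- The exact near-field channel gain (Eq. (1)). -/
noncomputable def zeta (A x y z : ℝ) : ℝ :=
  (1 / (12 * Real.pi)) *
    ∑ i ∈ Finset.range 2, ∑ j ∈ Finset.range 2,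
      (gfun A i x * gfun A j y * |z|) /
        (((gfun A j y) ^ 2 + z ^ 2) *
          Real.sqrt ((gfun A i x) ^ 2 + (gfun A j y) ^ 2 + z ^ 2)) +
  (1 / (6 * Real.pi)) *
    ∑ i ∈ Finset.range 2, ∑ j ∈ Finset.range 2,
      Real.arctan ((gfun A i x * gfun A j y) /
        (|z| * Real.sqrt ((gfun A i x) ^ 2 + (gfun A j y) ^ 2 + z ^ 2)))

/-- As `|z| → ∞`, `ζ(0,0,z) · 4πz²/A → 1`, matching the far-field broadside gain. -/
theorem stmt_7 (A : ℝ) (hA : 0 < A) :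
    Filter.Tendsto (fun z : ℝ => zeta A 0 0 z * (4 * Real.pi * z ^ 2 / A))
      (Filter.comap (fun z : ℝ => |z|) Filter.atTop) (nhds 1) := by
  have hsA : 0 < Real.sqrt A := Real.sqrt_pos.mpr hA
  set b : ℝ := (Real.sqrt A / 2) ^ 2 with hb
  have hb0 : 0 < b := by positivity
  have hAb : A = 4 * b := by
    rw [hb, div_pow, Real.sq_sqrt hA.le]; ring
  set s : ℝ → ℝ := fun t => Real.sqrt (2 * b + t ^ 2) with hs
  have hs0 : ∀ t : ℝ, 0 < s t := fun t => Real.sqrt_pos.mpr (by positivity)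
  set u : ℝ → ℝ := fun t => b / (t * s t) with hu
  -- q : t / s t → 1
  have hq : Filter.Tendsto (fun t : ℝ => t / s t) Filter.atTop (nhds 1) := by
    have h1 : Filter.Tendsto (fun t : ℝ => 2 * b / t ^ 2) Filter.atTop (nhds 0) :=
      Filter.Tendsto.div_atTop tendsto_const_nhds (tendsto_pow_atTop two_ne_zero)
    have h2 : Filter.Tendsto (fun x : ℝ => 1 / Real.sqrt (x + 1)) (nhds 0) (nhds 1) := by
      have hc : ContinuousAt (fun x : ℝ => 1 / Real.sqrt (x + 1)) 0 := by
        apply ContinuousAt.div continuousAt_const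
        · exact Real.continuous_sqrt.continuousAt.comp (by fun_prop)
        · norm_num
      simpa using hc.tendsto
    refine (h2.comp h1).congr' ?_
    filter_upwards [Filter.eventually_gt_atTop 0] with t ht
    show 1 / Real.sqrt (2 * b / t ^ 2 + 1) = t / s t
    have hss : s t = t * Real.sqrt (2 * b / t ^ 2 + 1) := by
      show Real.sqrt (2 * b + t ^ 2) = t * Real.sqrt (2 * b / t ^ 2 + 1)
      rw [show 2 * b + t ^ 2 = t ^ 2 * (2 * b / t ^ 2 + 1) by field_simp]
      rw [Real.sqrt_mul (by positivity), Real.sqrt_sq ht.le]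
    have hr0 : (0:ℝ) < Real.sqrt (2 * b / t ^ 2 + 1) := Real.sqrt_pos.mpr (by positivity)
    rw [hss]
    rw [div_mul_eq_div_div_swap, div_div_cancel_left' (ne_of_gt ht), one_div]
  -- p : t^2 / (b + t^2) → 1
  have hp : Filter.Tendsto (fun t : ℝ => t ^ 2 / (b + t ^ 2)) Filter.atTop (nhds 1) := by
    have h1 : Filter.Tendsto (fun t : ℝ => b / t ^ 2) Filter.atTop (nhds 0) :=
      Filter.Tendsto.div_atTop tendsto_const_nhds (tendsto_pow_atTop two_ne_zero)
    have h2 : Filter.Tendsto (fun x : ℝ => 1 / (x + 1)) (nhds 0) (nhds 1) := by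
      have hc : ContinuousAt (fun x : ℝ => 1 / (x + 1)) 0 := by
        apply ContinuousAt.div continuousAt_const (by fun_prop)
        norm_num
      simpa using hc.tendsto
    refine (h2.comp h1).congr' ?_
    filter_upwards [Filter.eventually_gt_atTop 0] with t ht
    show 1 / (b / t ^ 2 + 1) = t ^ 2 / (b + t ^ 2)
    rw [div_add' _ _ _ (by positivity), one_div_div]
    congr 1
    field_simp
  -- u → 0
  have hu0 : Filter.Tendsto u Filter.atTop (nhds 0) := by
    apply Filter.Tendsto.div_atTop tendsto_const_nhds
    apply Filter.Tendsto.atTop_mul_atTop₀ tendsto_id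
    apply tendsto_atTop_mono' _ _ tendsto_id
    filter_upwards [Filter.eventually_ge_atTop 0] with t ht
    calc t = Real.sqrt (t ^ 2) := by rw [Real.sqrt_sq ht]
    _ ≤ s t := Real.sqrt_le_sqrt (by linarith [hb0.le])
  have hune : ∀ᶠ t : ℝ in Filter.atTop, u t ≠ 0 := by
    filter_upwards [Filter.eventually_gt_atTop 0] with t ht
    have : 0 < u t := by
      rw [hu]
      exact div_pos hb0 (mul_pos ht (hs0 t))
    exact ne_of_gt this
  have huw : Filter.Tendsto u Filter.atTop (nhdsWithin 0 {(0:ℝ)}ᶜ) := by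
    rw [tendsto_nhdsWithin_iff]
    exact ⟨hu0, by filter_upwards [hune] with t ht using ht⟩
  -- arctan x / x → 1 at 0
  have hslope : Filter.Tendsto (fun x : ℝ => Real.arctan x / x)
      (nhdsWithin 0 {(0:ℝ)}ᶜ) (nhds 1) := by
    have h2 := hasDerivAt_iff_tendsto_slope.mp (Real.hasDerivAt_arctan (0:ℝ))
    norm_num at h2
    refine h2.congr fun x => ?_
    simp [slope_def_field]
  have hr : Filter.Tendsto (fun t : ℝ => Real.arctan (u t) / u t) Filter.atTop (nhds 1) :=
    hslope.comp huw
  -- key eventual equality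
  have key : ∀ᶠ t : ℝ in Filter.atTop, zeta A 0 0 t * (4 * Real.pi * t ^ 2 / A) =
      (1/3) * ((t ^ 2 / (b + t ^ 2)) * (t / s t)) +
      (2/3) * ((Real.arctan (u t) / u t) * (t / s t)) := by
    filter_upwards [Filter.eventually_gt_atTop 0] with t ht
    have habs : |t| = t := abs_of_pos ht
    have h1 : Real.sqrt A / 2 * (Real.sqrt A / 2) = b := by rw [hb]; ring
    have h3 : Real.sqrt ((Real.sqrt A / 2) ^ 2 + (Real.sqrt A / 2) ^ 2 + t ^ 2) = s t := by
      rw [hs]; congr 1; rw [← hb]; ring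
    have hzeta : zeta A 0 0 t =
        (1/(3*Real.pi)) * (b * t / ((b + t ^ 2) * s t)) +
        (2/(3*Real.pi)) * Real.arctan (u t) := by
      simp only [zeta, gfun, Finset.sum_range_succ, Finset.sum_range_zero, pow_zero, pow_one,
        one_mul, neg_one_mul, mul_zero, neg_zero, add_zero, zero_add, habs, h1, ← hb, h3, hu]
      simp only [hs]; ring_nf
    rw [hzeta, hAb, hu]
    have hb' : b ≠ 0 := hb0.ne'
    have hs' : s t ≠ 0 := (hs0 t).ne'
    have ht' : t ≠ 0 := ht.ne'
    have hbt : b + t ^ 2 ≠ 0 := by positivity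
    have hπ : Real.pi ≠ 0 := Real.pi_ne_zero
    field_simp
  -- main limit along atTop
  have hlim := ((hp.mul hq).const_mul (1/3 : ℝ)).add ((hr.mul hq).const_mul (2/3 : ℝ))
  norm_num at hlim
  have main : Filter.Tendsto (fun t : ℝ => zeta A 0 0 t * (4 * Real.pi * t ^ 2 / A))
      Filter.atTop (nhds 1) := Filter.Tendsto.congr' (key.mono fun t h => h.symm) hlim
  -- transfer through comap abs
  have habs : Filter.Tendsto (fun z : ℝ => |z|)
      (Filter.comap (fun z : ℝ => |z|) Filter.atTop) Filter.atTop := Filter.tendsto_comap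
  refine (main.comp habs).congr fun z => ?_
  show zeta A 0 0 |z| * (4 * Real.pi * |z| ^ 2 / A) = zeta A 0 0 z * (4 * Real.pi * z ^ 2 / A)
  rw [sq_abs]
  congr 1
  simp [zeta, abs_abs, sq_abs]
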